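/- Let G, H, J : I × ℝ → ℝ be C¹ functions, 2π-periodic in the second variable θ, on I × ℝ with I ⊂ (0,∞) an interval containing t₀, satisfying (∂/∂t − ∂/∂θ)(G + H) = J, (∂/∂t + ∂/∂θ)(G − H) = J, G ≥ 0, |H| ≤ G, and J(t,θ) ≥ −G(t,θ)/t everywhere. Then for all t ∈ I with t ≤ t₀: sup_θ G(t, θ) ≤ 2·[sup_θ G(t₀, θ) + sup_θ |H(t₀, θ)|]·(t₀/t). -/

import Mathlib

open Real Set

/-- Partial derivative with respect to the first (time) variable. -/
noncomputable def pd1 (f : ℝ → ℝ → ℝ) (t θ : ℝ) : ℝ := deriv (fun s => f s θ) t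

/-- Partial derivative with respect to the second (space) variable. -/
noncomputable def pd2 (f : ℝ → ℝ → ℝ) (t θ : ℝ) : ℝ := deriv (fun x => f t x) θ

lemma per_range_eq {f : ℝ → ℝ} (hper : Function.Periodic f (2*π)) :
    Set.range f = f '' Icc 0 (2*π) := by
  refine Subset.antisymm ?_ (image_subset_range f _)
  rintro _ ⟨x, rfl⟩
  obtain ⟨y, hy, hxy⟩ := hper.exists_mem_Ico₀ (by positivity) x
  exact ⟨y, Ico_subset_Icc_self hy, hxy.symm⟩

lemma per_iSup_eq {f : ℝ → ℝ} (hper : Function.Periodic f (2*π)) :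
    (⨆ θ : ℝ, f θ) = sSup (f '' Icc 0 (2*π)) := by
  rw [← per_range_eq hper]; rfl

lemma per_le_iSup {f : ℝ → ℝ} (hper : Function.Periodic f (2*π)) (hc : Continuous f) (θ : ℝ) :
    f θ ≤ ⨆ x : ℝ, f x := by
  rw [per_iSup_eq hper]
  refine le_csSup (isCompact_Icc.image hc).bddAbove ?_
  rw [← per_range_eq hper]
  exact mem_range_self θ

lemma pd1_hasDerivAt {f : ℝ → ℝ → ℝ} (hf : ContDiff ℝ 1 (Function.uncurry f)) (t θ : ℝ) :
    HasDerivAt (fun s => f s θ) (fderiv ℝ (Function.uncurry f) (t, θ) (1, 0)) t := by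
  have hfd := (hf.differentiable one_ne_zero (t, θ)).hasFDerivAt
  have h1 : HasDerivAt (fun s : ℝ => ((s, θ) : ℝ × ℝ)) ((1 : ℝ), (0 : ℝ)) t :=
    (hasDerivAt_id t).prodMk (hasDerivAt_const t θ)
  exact hfd.comp_hasDerivAt t h1

lemma pd2_hasDerivAt {f : ℝ → ℝ → ℝ} (hf : ContDiff ℝ 1 (Function.uncurry f)) (t θ : ℝ) :
    HasDerivAt (fun x => f t x) (fderiv ℝ (Function.uncurry f) (t, θ) (0, 1)) θ := by
  have hfd := (hf.differentiable one_ne_zero (t, θ)).hasFDerivAt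
  have h1 : HasDerivAt (fun x : ℝ => ((t, x) : ℝ × ℝ)) ((0 : ℝ), (1 : ℝ)) θ :=
    (hasDerivAt_const θ t).prodMk (hasDerivAt_id θ)
  exact hfd.comp_hasDerivAt θ h1

lemma char_minus {f : ℝ → ℝ → ℝ} (hf : ContDiff ℝ 1 (Function.uncurry f)) (c σ : ℝ) :
    HasDerivAt (fun s => f s (c - s)) (pd1 f σ (c - σ) - pd2 f σ (c - σ)) σ := by
  have hfd := (hf.differentiable one_ne_zero (σ, c - σ)).hasFDerivAt
  have h1 : HasDerivAt (fun s : ℝ => ((s, c - s) : ℝ × ℝ)) ((1 : ℝ), (-1 : ℝ)) σ :=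
    (hasDerivAt_id σ).prodMk ((hasDerivAt_id σ).const_sub c)
  have h2 := hfd.comp_hasDerivAt σ h1
  have e1 : pd1 f σ (c - σ) = fderiv ℝ (Function.uncurry f) (σ, c - σ) (1, 0) :=
    (pd1_hasDerivAt hf σ (c - σ)).deriv
  have e2 : pd2 f σ (c - σ) = fderiv ℝ (Function.uncurry f) (σ, c - σ) (0, 1) :=
    (pd2_hasDerivAt hf σ (c - σ)).deriv
  rw [e1, e2, ← ContinuousLinearMap.map_sub]
  have e : ((1:ℝ), (0:ℝ)) - ((0:ℝ), (1:ℝ)) = ((1:ℝ), (-1:ℝ)) := by norm_num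
  rw [e]
  exact h2

lemma char_plus {f : ℝ → ℝ → ℝ} (hf : ContDiff ℝ 1 (Function.uncurry f)) (c σ : ℝ) :
    HasDerivAt (fun s => f s (c + s)) (pd1 f σ (c + σ) + pd2 f σ (c + σ)) σ := by
  have hfd := (hf.differentiable one_ne_zero (σ, c + σ)).hasFDerivAt
  have h1 : HasDerivAt (fun s : ℝ => ((s, c + s) : ℝ × ℝ)) ((1 : ℝ), (1 : ℝ)) σ :=
    (hasDerivAt_id σ).prodMk ((hasDerivAt_id σ).const_add c)
  have h2 := hfd.comp_hasDerivAt σ h1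
  have e1 : pd1 f σ (c + σ) = fderiv ℝ (Function.uncurry f) (σ, c + σ) (1, 0) :=
    (pd1_hasDerivAt hf σ (c + σ)).deriv
  have e2 : pd2 f σ (c + σ) = fderiv ℝ (Function.uncurry f) (σ, c + σ) (0, 1) :=
    (pd2_hasDerivAt hf σ (c + σ)).deriv
  rw [e1, e2, ← ContinuousLinearMap.map_add]
  have e : ((1:ℝ), (0:ℝ)) + ((0:ℝ), (1:ℝ)) = ((1:ℝ), (1:ℝ)) := by norm_num
  rw [e]
  exact h2

/-- The past (contracting)-direction Gronwall energy bound for the T³-Gowdy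
EMDA system: the energy `G` can grow at most like `1/t` as `t` decreases
toward the singularity at `t = 0`. -/
theorem past_gronwall_energy_bound
    (G H J : ℝ → ℝ → ℝ) (I : Set ℝ) (hI : I ⊆ Ioi 0) (hIconn : I.OrdConnected)
    (t₀ : ℝ) (ht₀ : t₀ ∈ I)
    (hG : ContDiff ℝ 1 (Function.uncurry G))
    (hH : ContDiff ℝ 1 (Function.uncurry H))
    (hJ : ContDiff ℝ 1 (Function.uncurry J))
    (hGper : ∀ t : ℝ, Function.Periodic (G t) (2*π))
    (hHper : ∀ t : ℝ, Function.Periodic (H t) (2*π))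
    (hJper : ∀ t : ℝ, Function.Periodic (J t) (2*π))
    (hminus : ∀ t ∈ I, ∀ θ : ℝ,
      pd1 (fun t θ => G t θ + H t θ) t θ - pd2 (fun t θ => G t θ + H t θ) t θ = J t θ)
    (hplus : ∀ t ∈ I, ∀ θ : ℝ,
      pd1 (fun t θ => G t θ - H t θ) t θ + pd2 (fun t θ => G t θ - H t θ) t θ = J t θ)
    (hGpos : ∀ t ∈ I, ∀ θ : ℝ, 0 ≤ G t θ)
    (hHG : ∀ t ∈ I, ∀ θ : ℝ, |H t θ| ≤ G t θ)
    (hJG : ∀ t ∈ I, ∀ θ : ℝ, -(G t θ / t) ≤ J t θ) :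
    ∀ t ∈ I, t ≤ t₀ →
      (⨆ θ : ℝ, G t θ) ≤
        2 * ((⨆ θ : ℝ, G t₀ θ) + (⨆ θ : ℝ, |H t₀ θ|)) * (t₀ / t) := by
  intro t ht htle
  have ht0 : (0:ℝ) < t := hI ht
  have ht₀0 : (0:ℝ) < t₀ := hI ht₀
  have hsub : Icc t t₀ ⊆ I := hIconn.out ht ht₀
  have hπ : (0:ℝ) < 2*π := by positivity
  set F : ℝ → ℝ := fun s => sSup (G s '' Icc 0 (2*π)) with hFdef
  have hGc : Continuous (Function.uncurry G) := hG.continuous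
  have hHc : Continuous (Function.uncurry H) := hH.continuous
  have hGsc : ∀ s : ℝ, Continuous (G s) := fun s => hGc.comp (Continuous.prodMk_right s)
  have hFcont : Continuous F := isCompact_Icc.continuous_sSup hGc
  have hFsup : ∀ s : ℝ, (⨆ θ : ℝ, G s θ) = F s := fun s => per_iSup_eq (hGper s)
  have hGF : ∀ s θ : ℝ, G s θ ≤ F s := by
    intro s θ
    rw [← hFsup s]
    exact per_le_iSup (hGper s) (hGsc s) θ
  set M : ℝ := (⨆ θ : ℝ, G t₀ θ) + (⨆ θ : ℝ, |H t₀ θ|) with hMdef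
  have hHabs : ∀ θ : ℝ, |H t₀ θ| ≤ ⨆ x : ℝ, |H t₀ x| := by
    intro θ
    refine per_le_iSup (fun x => ?_) ((hHc.comp (Continuous.prodMk_right t₀)).abs) θ
    show |H t₀ (x + 2*π)| = |H t₀ x|
    rw [hHper t₀ x]
  have hGM : ∀ θ : ℝ, G t₀ θ ≤ ⨆ x : ℝ, G t₀ x := fun θ =>
    per_le_iSup (hGper t₀) (hGsc t₀) θ
  have hM1 : ∀ θ : ℝ, G t₀ θ + H t₀ θ ≤ M := fun θ =>
    add_le_add (hGM θ) ((le_abs_self _).trans (hHabs θ))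
  have hM2 : ∀ θ : ℝ, G t₀ θ - H t₀ θ ≤ M := by
    intro θ
    have h2 : -H t₀ θ ≤ ⨆ x : ℝ, |H t₀ x| := (neg_le_abs _).trans (hHabs θ)
    have := hGM θ
    rw [hMdef]
    linarith
  have hM0 : (0:ℝ) ≤ M := by
    have h1 := (hGpos t₀ ht₀ 0).trans (hGM 0)
    have h2 := (abs_nonneg (H t₀ 0)).trans (hHabs 0)
    rw [hMdef]
    linarith
  set q : ℝ → ℝ := fun σ => F σ / σ with hqdef
  have hqc : ContinuousOn q (Ioi 0) :=
    hFcont.continuousOn.div continuousOn_id (fun x hx => ne_of_gt hx)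
  set Φ : ℝ → ℝ := fun s => ∫ σ in s..t₀, q σ with hΦdef
  have hIccIoi : Icc t t₀ ⊆ Ioi 0 := fun x hx => lt_of_lt_of_le ht0 hx.1
  have hqint : ∀ s ∈ Icc t t₀, IntervalIntegrable q MeasureTheory.volume s t₀ := by
    intro s hs
    apply ContinuousOn.intervalIntegrable
    apply hqc.mono
    rw [uIcc_of_le hs.2]
    exact fun x hx => hIccIoi ⟨le_trans hs.1 hx.1, hx.2⟩
  -- key integral inequality along both characteristics
  have key : ∀ s ∈ Icc t t₀, F s ≤ M + Φ s := by
    intro s hs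
    obtain ⟨θs, hθs, hFs⟩ :=
      isCompact_Icc.exists_sSup_image_eq (nonempty_Icc.2 hπ.le) (hGsc s).continuousOn
    have hIccs : Icc s t₀ ⊆ I := fun x hx => hsub ⟨le_trans hs.1 hx.1, hx.2⟩
    have hGH : ContDiff ℝ 1 (Function.uncurry fun a b => G a b + H a b) := hG.add hH
    have hGmH : ContDiff ℝ 1 (Function.uncurry fun a b => G a b - H a b) := hG.sub hH
    -- minus characteristic
    have hchar1 : ∀ σ ∈ uIcc s t₀,
        HasDerivAt (fun x => G x (θs + s - x) + H x (θs + s - x)) (J σ (θs + s - σ)) σ := by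
      intro σ hσ
      rw [uIcc_of_le hs.2] at hσ
      have h := char_minus hGH (θs + s) σ
      rwa [hminus σ (hIccs hσ) (θs + s - σ)] at h
    have hJc1 : Continuous fun σ => J σ (θs + s - σ) :=
      hJ.continuous.comp (continuous_id.prodMk (continuous_const.sub continuous_id))
    have hint1 : IntervalIntegrable (fun σ => J σ (θs + s - σ)) MeasureTheory.volume s t₀ :=
      hJc1.intervalIntegrable s t₀
    have hftc1 := intervalIntegral.integral_eq_sub_of_hasDerivAt hchar1 hint1
    have hcomp1 : ∫ σ in s..t₀, -q σ ≤ ∫ σ in s..t₀, J σ (θs + s - σ) := by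
      apply intervalIntegral.integral_mono_on hs.2 ((hqint s hs).neg) hint1
      intro σ hσ
      have hσI : σ ∈ I := hIccs hσ
      have hσ0 : 0 < σ := hI hσI
      have h1 : G σ (θs + s - σ) / σ ≤ F σ / σ := by
        gcongr
        exact hGF σ _
      have h2 := hJG σ hσI (θs + s - σ)
      simp only [Pi.neg_apply, hqdef]
      linarith
    have hineq1 : G s θs + H s θs ≤ M + Φ s := by
      have hneg : (∫ σ in s..t₀, -q σ) = -Φ s := by
        rw [intervalIntegral.integral_neg, hΦdef]
      rw [hneg, hftc1] at hcomp1
      have hM' := hM1 (θs + s - t₀)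
      simp only [add_sub_cancel_right] at hcomp1
      linarith
    -- plus characteristic
    have hchar2 : ∀ σ ∈ uIcc s t₀,
        HasDerivAt (fun x => G x (θs - s + x) - H x (θs - s + x)) (J σ (θs - s + σ)) σ := by
      intro σ hσ
      rw [uIcc_of_le hs.2] at hσ
      have h := char_plus hGmH (θs - s) σ
      rwa [hplus σ (hIccs hσ) (θs - s + σ)] at h
    have hJc2 : Continuous fun σ => J σ (θs - s + σ) :=
      hJ.continuous.comp (continuous_id.prodMk (continuous_const.add continuous_id))
    have hint2 : IntervalIntegrable (fun σ => J σ (θs - s + σ)) MeasureTheory.volume s t₀ :=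
      hJc2.intervalIntegrable s t₀
    have hftc2 := intervalIntegral.integral_eq_sub_of_hasDerivAt hchar2 hint2
    have hcomp2 : ∫ σ in s..t₀, -q σ ≤ ∫ σ in s..t₀, J σ (θs - s + σ) := by
      apply intervalIntegral.integral_mono_on hs.2 ((hqint s hs).neg) hint2
      intro σ hσ
      have hσI : σ ∈ I := hIccs hσ
      have hσ0 : 0 < σ := hI hσI
      have h1 : G σ (θs - s + σ) / σ ≤ F σ / σ := by
        gcongr
        exact hGF σ _
      have h2 := hJG σ hσI (θs - s + σ)
      simp only [Pi.neg_apply, hqdef]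
      linarith
    have hineq2 : G s θs - H s θs ≤ M + Φ s := by
      have hneg : (∫ σ in s..t₀, -q σ) = -Φ s := by
        rw [intervalIntegral.integral_neg, hΦdef]
      rw [hneg, hftc2] at hcomp2
      have hM' := hM2 (θs - s + t₀)
      simp only [sub_add_cancel] at hcomp2
      linarith
    have hFseq : F s = G s θs := hFs
    linarith
  -- Gronwall step via monotonicity of ψ σ = σ (M + Φ σ)
  have hΦd : ∀ s ∈ Icc t t₀, HasDerivAt Φ (-q s) s := by
    intro s hs
    exact intervalIntegral.integral_hasDerivAt_left (hqint s hs)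
      (hqc.stronglyMeasurableAtFilter isOpen_Ioi s (hIccIoi hs))
      (hqc.continuousAt (isOpen_Ioi.mem_nhds (hIccIoi hs)))
  set ψ : ℝ → ℝ := fun σ => σ * (M + Φ σ) with hψdef
  have hψd : ∀ s ∈ Icc t t₀, HasDerivAt ψ (M + Φ s - F s) s := by
    intro s hs
    have hs0 : (0:ℝ) < s := hIccIoi hs
    have hsne : s ≠ 0 := ne_of_gt hs0
    have h2 : HasDerivAt (fun σ : ℝ => M + Φ σ) (0 + -q s) s :=
      (hasDerivAt_const s M).add (hΦd s hs)
    have h := (hasDerivAt_id s).mul h2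
    have hqs : s * q s = F s := by
      show s * (F s / s) = F s
      field_simp
    have heq : 1 * (M + Φ s) + id s * (0 + -q s) = M + Φ s - F s := by
      simp only [id_eq, one_mul, zero_add, mul_neg]
      linarith
    rw [heq] at h
    exact h
  have hψmono : MonotoneOn ψ (Icc t t₀) := by
    apply monotoneOn_of_deriv_nonneg (convex_Icc t t₀)
    · exact fun s hs => (hψd s hs).continuousAt.continuousWithinAt
    · intro s hs
      rw [interior_Icc] at hs
      exact (hψd s (Ioo_subset_Icc_self hs)).differentiableAt.differentiableWithinAt
    · intro s hs
      rw [interior_Icc] at hs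
      rw [(hψd s (Ioo_subset_Icc_self hs)).deriv]
      have := key s (Ioo_subset_Icc_self hs)
      linarith
  have hmemt : t ∈ Icc t t₀ := left_mem_Icc.2 htle
  have hmemt₀ : t₀ ∈ Icc t t₀ := right_mem_Icc.2 htle
  have hend : ψ t ≤ ψ t₀ := hψmono hmemt hmemt₀ htle
  have hΦt₀ : Φ t₀ = 0 := by
    rw [hΦdef]
    simp
  have hFt : F t ≤ M + Φ t := key t hmemt
  have h1 : t * (M + Φ t) ≤ t₀ * M := by
    have e : ψ t₀ = t₀ * M := by rw [hψdef]; simp [hΦt₀]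
    calc t * (M + Φ t) = ψ t := by rw [hψdef]
    _ ≤ ψ t₀ := hend
    _ = t₀ * M := e
  rw [hFsup t]
  have h2 : F t ≤ t₀ * M / t := by
    rw [le_div_iff₀ ht0]
    nlinarith [hFt, h1]
  have h4 : 2 * M * (t₀ / t) = 2 * (t₀ * M / t) := by ring
  have h5 : 0 ≤ t₀ * M / t := by positivity
  linarith
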